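/- The function U₂⁰(x) = (-1 - 6eˣ + 5e^{2x} + 2e^{3x} + 6e^{2x}x)/(2eˣ(1+eˣ)²) satisfies (D₀ H₀) U₂⁰ = 0 where D₀ = -d²/dx², H₀ = -d²/dx² + 1 + V and V(x) = -(3/2)/cosh(x/2)², and U₂⁰(x) → 1 as x → +∞. -/

import Mathlib

open Filter

noncomputable def U1f : ℝ → ℝ := fun x =>
  (1 + 4 * Real.exp x + 26 * Real.exp x ^ 2 + 28 * Real.exp x ^ 3 + 5 * Real.exp x ^ 4
      + 6 * x * Real.exp x ^ 2 - 6 * x * Real.exp x ^ 4)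
    / (2 * Real.exp x * (1 + Real.exp x) ^ 4)

noncomputable def U2f : ℝ → ℝ := fun x =>
  (-1 - 4 * Real.exp x + 20 * Real.exp x ^ 2 - 36 * Real.exp x ^ 3 - 11 * Real.exp x ^ 4
      + 6 * x * Real.exp x ^ 2 - 24 * x * Real.exp x ^ 3 + 6 * x * Real.exp x ^ 4)
    / (2 * Real.exp x * (1 + Real.exp x) ^ 4)

lemma hexp2 (x : ℝ) : Real.exp (2 * x) = Real.exp x ^ 2 := by
  rw [two_mul, Real.exp_add, sq]

lemma hexp3 (x : ℝ) : Real.exp (3 * x) = Real.exp x ^ 3 := by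
  rw [show (3:ℝ) * x = x + x + x by ring, Real.exp_add, Real.exp_add]; ring

lemma hUderiv (x : ℝ) :
    HasDerivAt (fun z : ℝ =>
      (-1 - 6 * Real.exp z + 5 * Real.exp (2 * z) + 2 * Real.exp (3 * z)
          + 6 * Real.exp (2 * z) * z)
        / (2 * Real.exp z * (1 + Real.exp z) ^ 2)) (U1f x) x := by
  have he : HasDerivAt Real.exp (Real.exp x) x := Real.hasDerivAt_exp x
  have h2 : HasDerivAt (fun z : ℝ => Real.exp (2 * z)) (Real.exp (2 * x) * 2) x :=
    by simpa using ((hasDerivAt_id x).const_mul 2).exp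
  have h3 : HasDerivAt (fun z : ℝ => Real.exp (3 * z)) (Real.exp (3 * x) * 3) x :=
    by simpa using ((hasDerivAt_id x).const_mul 3).exp
  have hN : HasDerivAt (fun z : ℝ =>
      -1 - 6 * Real.exp z + 5 * Real.exp (2 * z) + 2 * Real.exp (3 * z)
        + 6 * Real.exp (2 * z) * z)
      (0 - 6 * Real.exp x + 5 * (Real.exp (2 * x) * 2) + 2 * (Real.exp (3 * x) * 3)
        + (6 * (Real.exp (2 * x) * 2) * x + 6 * Real.exp (2 * x) * 1)) x := by
    exact ((((hasDerivAt_const x (-1:ℝ)).sub (he.const_mul 6)).add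
      (h2.const_mul 5)).add (h3.const_mul 2)).add ((h2.const_mul 6).mul (hasDerivAt_id x))
  have hD : HasDerivAt (fun z : ℝ => 2 * Real.exp z * (1 + Real.exp z) ^ 2)
      (2 * Real.exp x * (1 + Real.exp x) ^ 2
        + 2 * Real.exp x * (2 * (1 + Real.exp x) ^ 1 * Real.exp x)) x := by
    have := (he.const_mul 2).mul (((hasDerivAt_const x (1:ℝ)).add he).pow 2)
    refine this.congr_deriv ?_; norm_num
  have hpos : (0:ℝ) < 1 + Real.exp x := by positivity
  have hDne : 2 * Real.exp x * (1 + Real.exp x) ^ 2 ≠ 0 := by positivity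
  have := hN.div hD hDne
  refine this.congr_deriv ?_
  have h0 : Real.exp x ≠ 0 := (Real.exp_pos x).ne'
  have h1 : (1:ℝ) + Real.exp x ≠ 0 := hpos.ne'
  rw [hexp2, hexp3]
  unfold U1f
  field_simp
  ring

lemma hU1deriv (x : ℝ) : HasDerivAt U1f (U2f x) x := by
  have he : HasDerivAt Real.exp (Real.exp x) x := Real.hasDerivAt_exp x
  have hp : ∀ n : ℕ, HasDerivAt (fun z : ℝ => Real.exp z ^ n)
      ((n : ℝ) * Real.exp x ^ (n - 1) * Real.exp x) x := fun n => he.pow n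
  have hN : HasDerivAt (fun z : ℝ =>
      1 + 4 * Real.exp z + 26 * Real.exp z ^ 2 + 28 * Real.exp z ^ 3 + 5 * Real.exp z ^ 4
        + 6 * z * Real.exp z ^ 2 - 6 * z * Real.exp z ^ 4)
      (0 + 4 * Real.exp x + 26 * ((2 : ℝ) * Real.exp x ^ 1 * Real.exp x)
        + 28 * ((3 : ℝ) * Real.exp x ^ 2 * Real.exp x)
        + 5 * ((4 : ℝ) * Real.exp x ^ 3 * Real.exp x)
        + ((6 * 1) * Real.exp x ^ 2 + 6 * x * ((2 : ℝ) * Real.exp x ^ 1 * Real.exp x))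
        - ((6 * 1) * Real.exp x ^ 4 + 6 * x * ((4 : ℝ) * Real.exp x ^ 3 * Real.exp x))) x := by
    exact ((((((hasDerivAt_const x (1:ℝ)).add (he.const_mul 4)).add
      ((hp 2).const_mul 26)).add ((hp 3).const_mul 28)).add ((hp 4).const_mul 5)).add
      (((hasDerivAt_id x).const_mul 6).mul (hp 2))).sub
      (((hasDerivAt_id x).const_mul 6).mul (hp 4))
  have hD : HasDerivAt (fun z : ℝ => 2 * Real.exp z * (1 + Real.exp z) ^ 4)
      (2 * Real.exp x * (1 + Real.exp x) ^ 4
        + 2 * Real.exp x * (4 * (1 + Real.exp x) ^ 3 * Real.exp x)) x := by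
    have := (he.const_mul 2).mul (((hasDerivAt_const x (1:ℝ)).add he).pow 4)
    refine this.congr_deriv ?_; norm_num
  have hpos : (0:ℝ) < 1 + Real.exp x := by positivity
  have hDne : 2 * Real.exp x * (1 + Real.exp x) ^ 4 ≠ 0 := by positivity
  have := hN.div hD hDne
  refine this.congr_deriv ?_
  have h0 : Real.exp x ≠ 0 := (Real.exp_pos x).ne'
  have h1 : (1:ℝ) + Real.exp x ≠ 0 := hpos.ne'
  unfold U2f
  field_simp
  ring

lemma hcosh (y : ℝ) :
    -(3 / 2) / (Real.cosh (y / 2)) ^ 2 = -6 * Real.exp y / (1 + Real.exp y) ^ 2 := by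
  have hs : (0:ℝ) < Real.exp (y / 2) := Real.exp_pos _
  have h2 : Real.exp y = Real.exp (y / 2) ^ 2 := by
    rw [sq, ← Real.exp_add]; ring_nf
  rw [Real.cosh_eq, Real.exp_neg, h2]
  have h0 : Real.exp (y / 2) ≠ 0 := hs.ne'
  have h1 : (1:ℝ) + Real.exp (y / 2) ^ 2 ≠ 0 := by positivity
  field_simp
  ring

/-- U₂⁰ is in the kernel of D₀H₀ (where D₀H₀ f = -∂ₓ²(-f'' + f + Vf),
    V(x) = -(3/2)/cosh(x/2)²) and tends to 1 at +∞. -/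
theorem stmt_16 :
    (∀ x : ℝ,
      -(deriv (deriv (fun y : ℝ =>
          -(deriv (deriv (fun z : ℝ =>
              (-1 - 6 * Real.exp z + 5 * Real.exp (2 * z) + 2 * Real.exp (3 * z)
                  + 6 * Real.exp (2 * z) * z)
                / (2 * Real.exp z * (1 + Real.exp z) ^ 2))) y)
            + ((-1 - 6 * Real.exp y + 5 * Real.exp (2 * y) + 2 * Real.exp (3 * y)
                  + 6 * Real.exp (2 * y) * y)
                / (2 * Real.exp y * (1 + Real.exp y) ^ 2))
            + (-(3 / 2) / (Real.cosh (y / 2)) ^ 2)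
              * ((-1 - 6 * Real.exp y + 5 * Real.exp (2 * y) + 2 * Real.exp (3 * y)
                    + 6 * Real.exp (2 * y) * y)
                  / (2 * Real.exp y * (1 + Real.exp y) ^ 2)))) x) = 0) ∧
    Tendsto (fun x : ℝ =>
        (-1 - 6 * Real.exp x + 5 * Real.exp (2 * x) + 2 * Real.exp (3 * x)
            + 6 * Real.exp (2 * x) * x)
          / (2 * Real.exp x * (1 + Real.exp x) ^ 2)) atTop (nhds 1) := by
  constructor
  · intro x
    have key : (fun y : ℝ =>
          -(deriv (deriv (fun z : ℝ =>
              (-1 - 6 * Real.exp z + 5 * Real.exp (2 * z) + 2 * Real.exp (3 * z)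
                  + 6 * Real.exp (2 * z) * z)
                / (2 * Real.exp z * (1 + Real.exp z) ^ 2))) y)
            + ((-1 - 6 * Real.exp y + 5 * Real.exp (2 * y) + 2 * Real.exp (3 * y)
                  + 6 * Real.exp (2 * y) * y)
                / (2 * Real.exp y * (1 + Real.exp y) ^ 2))
            + (-(3 / 2) / (Real.cosh (y / 2)) ^ 2)
              * ((-1 - 6 * Real.exp y + 5 * Real.exp (2 * y) + 2 * Real.exp (3 * y)
                    + 6 * Real.exp (2 * y) * y)
                  / (2 * Real.exp y * (1 + Real.exp y) ^ 2)))
        = fun _ : ℝ => (1:ℝ) := by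
      funext y
      have hd1 : deriv (fun z : ℝ =>
          (-1 - 6 * Real.exp z + 5 * Real.exp (2 * z) + 2 * Real.exp (3 * z)
              + 6 * Real.exp (2 * z) * z)
            / (2 * Real.exp z * (1 + Real.exp z) ^ 2)) = U1f :=
        funext fun z => (hUderiv z).deriv
      have hd2 : deriv (deriv (fun z : ℝ =>
          (-1 - 6 * Real.exp z + 5 * Real.exp (2 * z) + 2 * Real.exp (3 * z)
              + 6 * Real.exp (2 * z) * z)
            / (2 * Real.exp z * (1 + Real.exp z) ^ 2))) y = U2f y := by
        rw [hd1]; exact (hU1deriv y).deriv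
      rw [hd2, hcosh y, hexp2 y, hexp3 y]
      unfold U2f
      have h0 : Real.exp y ≠ 0 := (Real.exp_pos y).ne'
      have h1 : (1:ℝ) + Real.exp y ≠ 0 := by positivity
      field_simp
      ring
    rw [key]
    simp
  · have heq : ∀ x : ℝ,
        (-1 - 6 * Real.exp x + 5 * Real.exp (2 * x) + 2 * Real.exp (3 * x)
            + 6 * Real.exp (2 * x) * x)
          / (2 * Real.exp x * (1 + Real.exp x) ^ 2)
        = (-Real.exp (-(3 * x)) - 6 * Real.exp (-(2 * x)) + 5 * Real.exp (-x) + 2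
            + 6 * x * Real.exp (-x))
          / (2 * Real.exp (-(2 * x)) + 4 * Real.exp (-x) + 2) := by
      intro x
      have h0 : Real.exp x ≠ 0 := (Real.exp_pos x).ne'
      rw [hexp2, hexp3, Real.exp_neg, Real.exp_neg, Real.exp_neg, hexp2, hexp3]
      have hden : 2 * ((Real.exp x)^2)⁻¹ + 4 * (Real.exp x)⁻¹ + 2 ≠ 0 := by positivity
      have h1 : (1:ℝ) + Real.exp x ≠ 0 := by positivity
      field_simp
      ring
    have hne : Tendsto (fun x : ℝ => Real.exp (-x)) atTop (nhds 0) :=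
      Real.tendsto_exp_neg_atTop_nhds_zero
    have hne2 : Tendsto (fun x : ℝ => Real.exp (-(2 * x))) atTop (nhds 0) :=
      Real.tendsto_exp_atBot.comp (tendsto_neg_atBot_iff.mpr
        (tendsto_id.const_mul_atTop two_pos))
    have hne3 : Tendsto (fun x : ℝ => Real.exp (-(3 * x))) atTop (nhds 0) :=
      Real.tendsto_exp_atBot.comp (tendsto_neg_atBot_iff.mpr
        (tendsto_id.const_mul_atTop three_pos))
    have hxe : Tendsto (fun x : ℝ => x * Real.exp (-x)) atTop (nhds 0) := by
      have := Real.tendsto_pow_mul_exp_neg_atTop_nhds_zero 1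
      simpa using this
    have hnum : Tendsto (fun x : ℝ =>
        -Real.exp (-(3 * x)) - 6 * Real.exp (-(2 * x)) + 5 * Real.exp (-x) + 2
          + 6 * x * Real.exp (-x)) atTop (nhds 2) := by
      have : Tendsto (fun x : ℝ =>
          -Real.exp (-(3 * x)) - 6 * Real.exp (-(2 * x)) + 5 * Real.exp (-x) + 2
            + 6 * x * Real.exp (-x)) atTop (nhds (-0 - 6 * 0 + 5 * 0 + 2 + 6 * 0)) := by
        exact ((((hne3.neg.sub (hne2.const_mul 6)).add (hne.const_mul 5)).add
          tendsto_const_nhds).add ((hxe.const_mul 6).congr (fun x => by ring)))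
      simpa using this
    have hden : Tendsto (fun x : ℝ =>
        2 * Real.exp (-(2 * x)) + 4 * Real.exp (-x) + 2) atTop (nhds 2) := by
      have : Tendsto (fun x : ℝ =>
          2 * Real.exp (-(2 * x)) + 4 * Real.exp (-x) + 2) atTop
          (nhds (2 * 0 + 4 * 0 + 2)) :=
        ((hne2.const_mul 2).add (hne.const_mul 4)).add tendsto_const_nhds
      simpa using this
    have := hnum.div hden (by norm_num)
    rw [show (2:ℝ)/2 = 1 by norm_num] at this
    exact this.congr (fun x => (heq x).symm)
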